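/- Monotonicity of essential support: if m solves the mean-field equation and m(t₀)([0,a)) = 0 for some a ∈ [0,1] and t₀ ≥ 0, then m(t)([0,a)) = 0 for all t ≥ t₀. (Hence ess inf m(t) is non-decreasing in t.) -/

import Mathlib

open MeasureTheory

/-- indicator of `Iio a` -/
noncomputable def essInd (a : ℝ) : ℝ → ℝ := (Set.Iio a).indicator 1

lemma essInd_nonneg (a u : ℝ) : 0 ≤ essInd a u := by
  unfold essInd; by_cases hu : u < a <;> simp [Set.indicator_apply, hu]

lemma essInd_le_one (a u : ℝ) : essInd a u ≤ 1 := by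
  unfold essInd; by_cases hu : u < a <;> simp [Set.indicator_apply, hu]

lemma essInd_of_lt {a u : ℝ} (h : u < a) : essInd a u = 1 := by
  simp [essInd, Set.indicator_apply, h]

lemma essInd_of_ge {a u : ℝ} (h : a ≤ u) : essInd a u = 0 := by
  simp [essInd, Set.indicator_apply, not_lt.mpr h]

lemma essInd_abs_le (a u : ℝ) : |essInd a u| ≤ 1 := by
  rw [abs_of_nonneg (essInd_nonneg a u)]; exact essInd_le_one a u

lemma measurable_essInd (a : ℝ) : Measurable (essInd a) :=
  measurable_const.indicator measurableSet_Iio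

lemma essInd_integral (a : ℝ) (μ : Measure ℝ) :
    ∫ x, essInd a x ∂μ = (μ (Set.Iio a)).toReal :=
  integral_indicator_one measurableSet_Iio

/-- the collision kernel for the indicator test function -/
noncomputable def essKer (a w Δ : ℝ) (x y : ℝ) : ℝ :=
  if |x - y| ≤ Δ then
    essInd a (w * x + (1 - w) * y) + essInd a (w * y + (1 - w) * x)
      - essInd a x - essInd a y
  else 0

lemma essKer_abs_le {w : ℝ} (a Δ : ℝ) (hw0 : 0 ≤ w) (hw1 : w ≤ 1) (x y : ℝ) :
    |essKer a w Δ x y| ≤ essInd a x + essInd a y := by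
  unfold essKer
  by_cases hc : |x - y| ≤ Δ
  · rw [if_pos hc]
    rcases le_or_gt a x with hx | hx
    · rcases le_or_gt a y with hy | hy
      · have h1 : a ≤ w * x + (1 - w) * y := by nlinarith
        have h2 : a ≤ w * y + (1 - w) * x := by nlinarith
        rw [essInd_of_ge hx, essInd_of_ge hy, essInd_of_ge h1, essInd_of_ge h2]
        norm_num
      · -- y < a, so essInd a y = 1
        rw [abs_le]
        have hy1 : essInd a y = 1 := essInd_of_lt hy
        constructor
        · have := essInd_le_one a x
          have := essInd_le_one a y
          have := essInd_nonneg a (w * x + (1 - w) * y)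
          have := essInd_nonneg a (w * y + (1 - w) * x)
          have := essInd_nonneg a x
          linarith
        · have := essInd_le_one a (w * x + (1 - w) * y)
          have := essInd_le_one a (w * y + (1 - w) * x)
          have := essInd_nonneg a x
          have := essInd_nonneg a y
          linarith [essInd_nonneg a x]
    · -- x < a
      rw [abs_le]
      have hx1 : essInd a x = 1 := essInd_of_lt hx
      constructor
      · have := essInd_le_one a x
        have := essInd_le_one a y
        have := essInd_nonneg a (w * x + (1 - w) * y)
        have := essInd_nonneg a (w * y + (1 - w) * x)
        have := essInd_nonneg a y
        linarith
      · have := essInd_le_one a (w * x + (1 - w) * y)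
        have := essInd_le_one a (w * y + (1 - w) * x)
        have := essInd_nonneg a x
        have := essInd_nonneg a y
        linarith
  · rw [if_neg hc]
    rw [abs_zero]
    have := essInd_nonneg a x
    have := essInd_nonneg a y
    linarith

lemma essKer_abs_le_two {w : ℝ} (a Δ : ℝ) (hw0 : 0 ≤ w) (hw1 : w ≤ 1) (x y : ℝ) :
    |essKer a w Δ x y| ≤ 2 := by
  have := essKer_abs_le a Δ hw0 hw1 x y
  have := essInd_le_one a x
  have := essInd_le_one a y
  linarith

lemma measurable_essKer_uncurry (a w Δ : ℝ) :
    Measurable (Function.uncurry (essKer a w Δ)) := by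
  unfold essKer Function.uncurry
  have hset : MeasurableSet {p : ℝ × ℝ | |p.1 - p.2| ≤ Δ} := by
    have : Measurable fun p : ℝ × ℝ => |p.1 - p.2| :=
      (measurable_fst.sub measurable_snd).abs
    exact this measurableSet_Iic
  refine Measurable.ite hset ?_ measurable_const
  have h1 : Measurable fun p : ℝ × ℝ => essInd a (w * p.1 + (1 - w) * p.2) :=
    (measurable_essInd a).comp
      ((measurable_fst.const_mul w).add (measurable_snd.const_mul (1 - w)))
  have h2 : Measurable fun p : ℝ × ℝ => essInd a (w * p.2 + (1 - w) * p.1) :=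
    (measurable_essInd a).comp
      ((measurable_snd.const_mul w).add (measurable_fst.const_mul (1 - w)))
  have h3 : Measurable fun p : ℝ × ℝ => essInd a p.1 :=
    (measurable_essInd a).comp measurable_fst
  have h4 : Measurable fun p : ℝ × ℝ => essInd a p.2 :=
    (measurable_essInd a).comp measurable_snd
  exact ((h1.add h2).sub h3).sub h4

lemma measurable_essKer_left (a w Δ x : ℝ) : Measurable (essKer a w Δ x) := by
  have := (measurable_essKer_uncurry a w Δ).comp (measurable_prodMk_left (x := x))
  exact this

/-- integrability of bounded measurable functions w.r.t. finite measures -/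
lemma bdd_integrable {μ : Measure ℝ} [IsFiniteMeasure μ] {f : ℝ → ℝ}
    (hf : AEStronglyMeasurable f μ) {C : ℝ} (h : ∀ x, |f x| ≤ C) : Integrable f μ :=
  (integrable_const C).mono' hf (Filter.Eventually.of_forall fun x => by
    simpa [Real.norm_eq_abs] using h x)

/-- key estimate: the collision functional is bounded by `2 μ(Iio a)` -/
lemma collision_abs_le {w : ℝ} (a Δ : ℝ) (hw0 : 0 ≤ w) (hw1 : w ≤ 1)
    (μ : Measure ℝ) [IsProbabilityMeasure μ] :
    |∫ x, (∫ y, essKer a w Δ x y ∂μ) ∂μ| ≤ 2 * (μ (Set.Iio a)).toReal := by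
  set c : ℝ := (μ (Set.Iio a)).toReal with hc
  have hind_int : Integrable (essInd a) μ :=
    bdd_integrable (measurable_essInd a).aestronglyMeasurable (essInd_abs_le a)
  have hGmeas : Measurable fun x => ∫ y, essKer a w Δ x y ∂μ := by
    have := (measurable_essKer_uncurry a w Δ).stronglyMeasurable.integral_prod_right'
      (ν := μ)
    exact this.measurable
  have hGbd : ∀ x, |∫ y, essKer a w Δ x y ∂μ| ≤ essInd a x + c := by
    intro x
    have h1 : |∫ y, essKer a w Δ x y ∂μ| ≤ ∫ y, |essKer a w Δ x y| ∂μ := by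
      simpa [Real.norm_eq_abs] using
        norm_integral_le_integral_norm (f := fun y => essKer a w Δ x y) (μ := μ)
    have hKint : Integrable (fun y => |essKer a w Δ x y|) μ :=
      bdd_integrable ((measurable_essKer_left a w Δ x).abs.aestronglyMeasurable)
        (C := 2) (fun y => by
          rw [abs_abs]; exact essKer_abs_le_two a Δ hw0 hw1 x y)
    have hrhs_int : Integrable (fun y => essInd a x + essInd a y) μ :=
      (integrable_const (essInd a x)).add hind_int
    have h2 : ∫ y, |essKer a w Δ x y| ∂μ ≤ ∫ y, (essInd a x + essInd a y) ∂μ :=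
      integral_mono hKint hrhs_int (fun y => essKer_abs_le a Δ hw0 hw1 x y)
    have h3 : ∫ y, (essInd a x + essInd a y) ∂μ = essInd a x + c := by
      rw [integral_add (integrable_const _) hind_int, integral_const, essInd_integral]
      simp [hc]
    linarith [h1, h2.trans_eq h3]
  have hG_int : Integrable (fun x => ∫ y, essKer a w Δ x y ∂μ) μ :=
    bdd_integrable hGmeas.aestronglyMeasurable (C := 1 + c)
      (fun x => (hGbd x).trans (by linarith [essInd_le_one a x]))
  have h1 : |∫ x, (∫ y, essKer a w Δ x y ∂μ) ∂μ|
      ≤ ∫ x, |∫ y, essKer a w Δ x y ∂μ| ∂μ := by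
    simpa [Real.norm_eq_abs] using
      norm_integral_le_integral_norm (f := fun x => ∫ y, essKer a w Δ x y ∂μ) (μ := μ)
  have habs_int : Integrable (fun x => |∫ y, essKer a w Δ x y ∂μ|) μ :=
    hG_int.abs
  have hrhs_int : Integrable (fun x => essInd a x + c) μ :=
    hind_int.add (integrable_const c)
  have h2 : ∫ x, |∫ y, essKer a w Δ x y ∂μ| ∂μ ≤ ∫ x, (essInd a x + c) ∂μ :=
    integral_mono habs_int hrhs_int hGbd
  have h3 : ∫ x, (essInd a x + c) ∂μ = c + c := by
    rw [integral_add hind_int (integrable_const _), integral_const, essInd_integral]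
    simp [hc]
  linarith

/-- forward Grönwall: `u ≤ ∫ 2u` and continuous implies `u β ≤ 0` -/
lemma gronwall_fwd {α β : ℝ} (hab : α ≤ β) {u : ℝ → ℝ}
    (hu : ContinuousOn u (Set.Icc α β))
    (hineq : ∀ s ∈ Set.Icc α β, u s ≤ ∫ r in α..s, 2 * u r) : u β ≤ 0 := by
  set f : ℝ → ℝ := fun r => 2 * u r with hf
  have hf_cont : ContinuousOn f (Set.Icc α β) := continuousOn_const.mul hu
  have hf_ii : ∀ s ∈ Set.Icc α β, IntervalIntegrable f volume α s := by
    intro s hs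
    apply ContinuousOn.intervalIntegrable
    apply hf_cont.mono
    rw [Set.uIcc_of_le hs.1]
    exact Set.Icc_subset_Icc le_rfl hs.2
  set v : ℝ → ℝ := fun s => ∫ r in α..s, f r with hv
  have hv_cont : ContinuousOn v (Set.Icc α β) := by
    have := intervalIntegral.continuousOn_primitive_interval'
      (hf_ii β (Set.right_mem_Icc.mpr hab)) (Set.left_mem_uIcc (a := α) (b := β))
    rwa [Set.uIcc_of_le hab] at this
  have hv_deriv : ∀ s ∈ Set.Ioo α β, HasDerivAt v (f s) s := by
    intro s hs
    apply intervalIntegral.integral_hasDerivAt_right (hf_ii s ⟨hs.1.le, hs.2.le⟩)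
    · exact ContinuousOn.stronglyMeasurableAtFilter isOpen_Ioo
        (hf_cont.mono Set.Ioo_subset_Icc_self) s hs
    · exact (hf_cont.mono Set.Ioo_subset_Icc_self).continuousAt
        (Ioo_mem_nhds hs.1 hs.2)
  set ω : ℝ → ℝ := fun s => Real.exp (-2 * s) * v s with hω
  have hexp : ∀ s : ℝ, HasDerivAt (fun r => Real.exp (-2 * r))
      (Real.exp (-2 * s) * (-2)) s := by
    intro s
    simpa using ((hasDerivAt_id s).const_mul (-2)).exp
  have hω_deriv : ∀ s ∈ Set.Ioo α β,
      HasDerivAt ω (Real.exp (-2 * s) * (-2) * v s + Real.exp (-2 * s) * f s) s := by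
    intro s hs
    exact (hexp s).mul (hv_deriv s hs)
  have hanti : AntitoneOn ω (Set.Icc α β) := by
    apply antitoneOn_of_deriv_nonpos (convex_Icc α β)
    · exact (Real.continuous_exp.comp (continuous_const.mul continuous_id)).continuousOn.mul
        hv_cont
    · intro s hs
      rw [interior_Icc] at hs
      exact (hω_deriv s hs).differentiableAt.differentiableWithinAt
    · intro s hs
      rw [interior_Icc] at hs
      rw [(hω_deriv s hs).deriv]
      have husv : u s ≤ v s := hineq s ⟨hs.1.le, hs.2.le⟩
      have hep : (0:ℝ) < Real.exp (-2 * s) := Real.exp_pos _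
      have : f s = 2 * u s := rfl
      nlinarith
  have hωβα : ω β ≤ ω α :=
    hanti (Set.left_mem_Icc.mpr hab) (Set.right_mem_Icc.mpr hab) hab
  have hωα : ω α = 0 := by
    simp [hω, hv, intervalIntegral.integral_same]
  have hvβ : v β ≤ 0 := by
    have hep : (0:ℝ) < Real.exp (-2 * β) := Real.exp_pos _
    rw [hωα] at hωβα
    have h2 : Real.exp (-2 * β) * v β ≤ 0 := hωβα
    nlinarith
  exact (hineq β (Set.right_mem_Icc.mpr hab)).trans hvβ

/-- backward Grönwall, by reflection -/
lemma gronwall_bwd {α β : ℝ} (hab : α ≤ β) {u : ℝ → ℝ}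
    (hu : ContinuousOn u (Set.Icc α β))
    (hineq : ∀ s ∈ Set.Icc α β, u s ≤ ∫ r in s..β, 2 * u r) : u α ≤ 0 := by
  set u' : ℝ → ℝ := fun s => u (α + β - s) with hu'
  have hmaps : Set.MapsTo (fun s => α + β - s) (Set.Icc α β) (Set.Icc α β) := by
    intro s hs
    obtain ⟨h1, h2⟩ := hs
    show α + β - s ∈ Set.Icc α β
    exact Set.mem_Icc.mpr ⟨by linarith, by linarith⟩
  have hu'_cont : ContinuousOn u' (Set.Icc α β) :=
    hu.comp (continuous_const.sub continuous_id).continuousOn hmaps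
  have hβ : u' β = u α := by simp [hu']
  rw [← hβ]
  apply gronwall_fwd hab hu'_cont
  intro s hs
  have hms : α + β - s ∈ Set.Icc α β := hmaps hs
  have key := hineq (α + β - s) hms
  have hsub : (∫ r in α..s, 2 * u' r) = ∫ r in (α + β - s)..β, 2 * u r := by
    have h := intervalIntegral.integral_comp_sub_left (a := α) (b := s)
      (fun r => 2 * u r) (α + β)
    rw [hu']
    simp only
    rw [h]
    norm_num
  calc u' s = u (α + β - s) := rfl
    _ ≤ ∫ r in (α + β - s)..β, 2 * u r := key
    _ = ∫ r in α..s, 2 * u' r := hsub.symm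

theorem ess_inf_monotone (Δ w : ℝ) (hΔ : Δ ∈ Set.Ioc (0:ℝ) 1)
    (hw : w ∈ Set.Ioo (0:ℝ) 1)
    (m : ℝ → Measure ℝ)
    (hprob : ∀ t, IsProbabilityMeasure (m t))
    (hsupp : ∀ t, m t (Set.Icc (0:ℝ) 1)ᶜ = 0)
    (heq : ∀ h : ℝ → ℝ, Measurable h → (∃ C, ∀ u, |h u| ≤ C) →
      ∀ t : ℝ, 0 ≤ t →
        (∫ x, h x ∂ m t) - (∫ x, h x ∂ m 0) =
          ∫ s in (0:ℝ)..t, ∫ x, (∫ y,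
            (if |x - y| ≤ Δ then
              h (w * x + (1 - w) * y) + h (w * y + (1 - w) * x) - h x - h y
            else 0) ∂ m s) ∂ m s)
    (a : ℝ) (ha : a ∈ Set.Icc (0:ℝ) 1) (t₀ : ℝ) (ht₀ : 0 ≤ t₀)
    (hzero : m t₀ (Set.Ico (0:ℝ) a) = 0) :
    ∀ t : ℝ, t₀ ≤ t → m t (Set.Ico (0:ℝ) a) = 0 := by
  obtain ⟨hw0, hw1⟩ := hw
  intro t ht
  have ht0 : (0:ℝ) ≤ t := le_trans ht₀ ht
  haveI : ∀ s, IsProbabilityMeasure (m s) := hprob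
  -- φ
  set φ : ℝ → ℝ := fun s => ((m s) (Set.Iio a)).toReal with hφdef
  have hφ_nonneg : ∀ s, 0 ≤ φ s := fun s => ENNReal.toReal_nonneg
  -- m s (Iio a) = m s (Ico 0 a)
  have hIio_eq : ∀ s, m s (Set.Iio a) = m s (Set.Ico 0 a) := by
    intro s
    have hsub : Set.Iio (0:ℝ) ⊆ (Set.Icc (0:ℝ) 1)ᶜ := by
      intro x hx
      simp only [Set.mem_compl_iff, Set.mem_Icc, not_and_or, not_le]
      left; exact hx
    have h0 : m s (Set.Iio (0:ℝ)) = 0 :=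
      measure_mono_null hsub (hsupp s)
    have hdecomp : Set.Iio a = Set.Iio (0:ℝ) ∪ Set.Ico 0 a := by
      ext x
      simp only [Set.mem_Iio, Set.mem_union, Set.mem_Ico]
      constructor
      · intro hx
        rcases lt_or_ge x 0 with h | h
        · exact Or.inl h
        · exact Or.inr ⟨h, hx⟩
      · rintro (h | ⟨_, h⟩)
        · exact h.trans_le ha.1
        · exact h
    apply le_antisymm
    · rw [hdecomp]
      calc m s (Set.Iio 0 ∪ Set.Ico 0 a) ≤ m s (Set.Iio 0) + m s (Set.Ico 0 a) :=
            measure_union_le _ _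
        _ = m s (Set.Ico 0 a) := by rw [h0, zero_add]
    · exact measure_mono (Set.Ico_subset_Iio_self)
  have hφt₀ : φ t₀ = 0 := by
    simp only [hφdef, hIio_eq t₀, hzero, ENNReal.toReal_zero]
  -- goal reduction
  suffices hφt : φ t = 0 by
    have : m t (Set.Iio a) = 0 := by
      have hne : m t (Set.Iio a) ≠ ⊤ := measure_ne_top _ _
      rw [hφdef] at hφt
      simpa [ENNReal.toReal_eq_zero_iff, hne] using hφt
    rw [← hIio_eq]
    exact this
  -- integral of the indicator
  have hint_ind : ∀ s, ∫ x, essInd a x ∂ m s = φ s := fun s => essInd_integral a (m s)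
  -- the collision functional
  set F : ℝ → ℝ := fun s => ∫ x, (∫ y,
      (if |x - y| ≤ Δ then
        essInd a (w * x + (1 - w) * y) + essInd a (w * y + (1 - w) * x)
          - essInd a x - essInd a y
      else 0) ∂ m s) ∂ m s with hFdef
  have hF_eq_ker : ∀ s, F s = ∫ x, (∫ y, essKer a w Δ x y ∂ m s) ∂ m s := by
    intro s; rfl
  have hF_abs : ∀ s, |F s| ≤ 2 * φ s := by
    intro s
    rw [hF_eq_ker s]
    exact collision_abs_le a Δ hw0.le hw1.le (m s)
  -- the weak equation for the indicator
  have heqφ : ∀ s : ℝ, 0 ≤ s → φ s - φ 0 = ∫ r in (0:ℝ)..s, F r := by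
    intro s hs
    have := heq (essInd a) (measurable_essInd a) ⟨1, essInd_abs_le a⟩ s hs
    rwa [hint_ind s, hint_ind 0] at this
  by_cases hI : IntervalIntegrable F volume 0 t
  · -- Case A: F integrable on [0, t]; forward Grönwall on [t₀, t]
    have hIs : ∀ s₁ s₂ : ℝ, 0 ≤ s₁ → s₁ ≤ s₂ → s₂ ≤ t →
        IntervalIntegrable F volume s₁ s₂ := by
      intro s₁ s₂ h1 h2 h3
      apply hI.mono_set
      rw [Set.uIcc_of_le h2, Set.uIcc_of_le ht0]
      exact Set.Icc_subset_Icc h1 h3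
    have hrep : ∀ s ∈ Set.Icc (0:ℝ) t, φ s = φ 0 + ∫ r in (0:ℝ)..s, F r := by
      intro s hs
      have := heqφ s hs.1
      linarith
    have hφ_cont : ContinuousOn φ (Set.Icc 0 t) := by
      have hprim : ContinuousOn (fun s => φ 0 + ∫ r in (0:ℝ)..s, F r) (Set.Icc 0 t) := by
        apply continuousOn_const.add
        have := intervalIntegral.continuousOn_primitive_interval' hI
          (Set.left_mem_uIcc (a := (0:ℝ)) (b := t))
        rwa [Set.uIcc_of_le ht0] at this
      exact hprim.congr fun s hs => hrep s hs
    have hineq : ∀ s ∈ Set.Icc t₀ t, φ s ≤ ∫ r in t₀..s, 2 * φ r := by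
      intro s hs
      have hs0 : (0:ℝ) ≤ s := le_trans ht₀ hs.1
      have hstep : φ s = φ t₀ + ∫ r in t₀..s, F r := by
        have h1 := heqφ s hs0
        have h2 := heqφ t₀ ht₀
        have hadd : (∫ r in (0:ℝ)..t₀, F r) + (∫ r in t₀..s, F r)
            = ∫ r in (0:ℝ)..s, F r :=
          intervalIntegral.integral_add_adjacent_intervals
            (hIs 0 t₀ le_rfl ht₀ (le_trans hs.1 hs.2 |>.trans le_rfl |>.trans le_rfl |>.trans le_rfl))
            (hIs t₀ s ht₀ hs.1 hs.2)
        linarith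
      have hmono : (∫ r in t₀..s, F r) ≤ ∫ r in t₀..s, 2 * φ r := by
        apply intervalIntegral.integral_mono_on hs.1 (hIs t₀ s ht₀ hs.1 hs.2)
        · apply ContinuousOn.intervalIntegrable
          apply (continuousOn_const.mul hφ_cont).mono
          rw [Set.uIcc_of_le hs.1]
          exact Set.Icc_subset_Icc ht₀ hs.2
        · intro r _
          show F r ≤ 2 * φ r
          exact (le_abs_self _).trans (hF_abs r)
      rw [hstep, hφt₀, zero_add]
      exact hmono
    have := gronwall_fwd ht (hφ_cont.mono (Set.Icc_subset_Icc ht₀ le_rfl)) hineq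
    linarith [hφ_nonneg t]
  · -- Case B: F not integrable on [0, t]
    have hφt_eq : φ t = φ 0 := by
      have := heqφ t ht0
      rw [intervalIntegral.integral_undef hI] at this
      linarith
    by_cases hI0 : IntervalIntegrable F volume 0 t₀
    · -- B2: backward Grönwall on [0, t₀] gives φ 0 = 0
      have hIs : ∀ s₁ s₂ : ℝ, 0 ≤ s₁ → s₁ ≤ s₂ → s₂ ≤ t₀ →
          IntervalIntegrable F volume s₁ s₂ := by
        intro s₁ s₂ h1 h2 h3
        apply hI0.mono_set
        rw [Set.uIcc_of_le h2, Set.uIcc_of_le ht₀]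
        exact Set.Icc_subset_Icc h1 h3
      have hrep : ∀ s ∈ Set.Icc (0:ℝ) t₀, φ s = φ 0 + ∫ r in (0:ℝ)..s, F r := by
        intro s hs
        have := heqφ s hs.1
        linarith
      have hφ_cont : ContinuousOn φ (Set.Icc 0 t₀) := by
        have hprim : ContinuousOn (fun s => φ 0 + ∫ r in (0:ℝ)..s, F r)
            (Set.Icc 0 t₀) := by
          apply continuousOn_const.add
          have := intervalIntegral.continuousOn_primitive_interval' hI0
            (Set.left_mem_uIcc (a := (0:ℝ)) (b := t₀))
          rwa [Set.uIcc_of_le ht₀] at this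
        exact hprim.congr fun s hs => hrep s hs
      have hineq : ∀ s ∈ Set.Icc (0:ℝ) t₀, φ s ≤ ∫ r in s..t₀, 2 * φ r := by
        intro s hs
        have hstep : φ s = - ∫ r in s..t₀, F r := by
          have h1 := hrep s hs
          have h2 := hrep t₀ (Set.right_mem_Icc.mpr ht₀)
          have hadd : (∫ r in (0:ℝ)..s, F r) + (∫ r in s..t₀, F r)
              = ∫ r in (0:ℝ)..t₀, F r :=
            intervalIntegral.integral_add_adjacent_intervals
              (hIs 0 s le_rfl hs.1 hs.2) (hIs s t₀ hs.1 hs.2 le_rfl)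
          rw [hφt₀] at h2
          linarith
        have hmono : (- ∫ r in s..t₀, F r) ≤ ∫ r in s..t₀, 2 * φ r := by
          rw [← intervalIntegral.integral_neg]
          apply intervalIntegral.integral_mono_on hs.2
            ((hIs s t₀ hs.1 hs.2 le_rfl).neg)
          · apply ContinuousOn.intervalIntegrable
            apply (continuousOn_const.mul hφ_cont).mono
            rw [Set.uIcc_of_le hs.2]
            exact Set.Icc_subset_Icc hs.1 le_rfl
          · intro r _
            show -F r ≤ 2 * φ r
            have h1 := hF_abs r
            have h2 := neg_abs_le (F r)
            linarith
        rw [hstep]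
        exact hmono
      have hφ0 : φ 0 ≤ 0 := gronwall_bwd ht₀ hφ_cont hineq
      have : φ 0 = 0 := le_antisymm hφ0 (hφ_nonneg 0)
      rw [hφt_eq, this]
    · -- B1: φ 0 = φ t₀ = 0
      have : φ t₀ - φ 0 = 0 := by
        have := heqφ t₀ ht₀
        rw [intervalIntegral.integral_undef hI0] at this
        exact this
      rw [hφt_eq]
      linarith [hφt₀]
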